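/- Let ψ : [0,1] → ℝⁿ be a C¹ curve and Γ, Φ : ℝⁿ → ℝⁿ continuous vector fields. If μ and ν are C¹ functions on a neighborhood of the image of ψ that both satisfy ∇f + Γ f = Φ along ψ, and μ(ψ(0)) = ν(ψ(0)), then μ(ψ(t)) = ν(ψ(t)) for all t ∈ [0,1]. -/

import Mathlib

open scoped RealInnerProductSpace

theorem stmt_1 {n : ℕ} (ψ : ℝ → EuclideanSpace ℝ (Fin n))
    (Γ Φ : EuclideanSpace ℝ (Fin n) → EuclideanSpace ℝ (Fin n))
    (U : Set (EuclideanSpace ℝ (Fin n))) (μ ν : EuclideanSpace ℝ (Fin n) → ℝ)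
    (hψ : ContDiff ℝ 1 ψ) (hΓ : Continuous Γ) (hΦ : Continuous Φ)
    (hU : IsOpen U) (hUim : ψ '' Set.Icc (0:ℝ) 1 ⊆ U)
    (hμ : ContDiffOn ℝ 1 μ U) (hν : ContDiffOn ℝ 1 ν U)
    (heqμ : ∀ t ∈ Set.Icc (0:ℝ) 1,
      gradient μ (ψ t) + μ (ψ t) • Γ (ψ t) = Φ (ψ t))
    (heqν : ∀ t ∈ Set.Icc (0:ℝ) 1,
      gradient ν (ψ t) + ν (ψ t) • Γ (ψ t) = Φ (ψ t))
    (h0 : μ (ψ 0) = ν (ψ 0)) :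
    ∀ t ∈ Set.Icc (0:ℝ) 1, μ (ψ t) = ν (ψ t) := by
  set g : ℝ → ℝ := fun t => μ (ψ t) - ν (ψ t) with hg
  set g' : ℝ → ℝ := fun t => -(⟪Γ (ψ t), deriv ψ t⟫ * g t) with hg'
  have hψd : Differentiable ℝ ψ := hψ.differentiable one_ne_zero
  have hmem : ∀ t ∈ Set.Icc (0:ℝ) 1, ψ t ∈ U := fun t ht =>
    hUim ⟨t, ht, rfl⟩
  -- derivative of g at each point of [0,1]
  have hderiv : ∀ t ∈ Set.Icc (0:ℝ) 1, HasDerivAt g (g' t) t := by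
    intro t ht
    have hUm := hmem t ht
    have hdμ : DifferentiableAt ℝ μ (ψ t) :=
      (hμ.differentiableOn one_ne_zero).differentiableAt (hU.mem_nhds hUm)
    have hdν : DifferentiableAt ℝ ν (ψ t) :=
      (hν.differentiableOn one_ne_zero).differentiableAt (hU.mem_nhds hUm)
    have hμg := hdμ.hasGradientAt
    have hνg := hdν.hasGradientAt
    have hψt : HasDerivAt ψ (deriv ψ t) t := (hψd t).hasDerivAt
    have h1 : HasDerivAt (fun s => μ (ψ s)) (⟪gradient μ (ψ t), deriv ψ t⟫) t := by
      have := hμg.hasFDerivAt.comp_hasDerivAt t hψt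
      simp [InnerProductSpace.toDual_apply_apply] at this ⊢
      exact this
    have h2 : HasDerivAt (fun s => ν (ψ s)) (⟪gradient ν (ψ t), deriv ψ t⟫) t := by
      have := hνg.hasFDerivAt.comp_hasDerivAt t hψt
      simp [InnerProductSpace.toDual_apply_apply] at this ⊢
      exact this
    have h3 := h1.sub h2
    have hgrad : gradient μ (ψ t) - gradient ν (ψ t) = (ν (ψ t) - μ (ψ t)) • Γ (ψ t) := by
      have e1 := heqμ t ht
      have e2 := heqν t ht
      have key : gradient μ (ψ t) + μ (ψ t) • Γ (ψ t)
          = gradient ν (ψ t) + ν (ψ t) • Γ (ψ t) := by rw [e1, e2]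
      rw [sub_smul, sub_eq_sub_iff_add_eq_add, key, add_comm]
    have : ⟪gradient μ (ψ t), deriv ψ t⟫ - ⟪gradient ν (ψ t), deriv ψ t⟫ = g' t := by
      rw [← inner_sub_left, hgrad, real_inner_smul_left, hg']
      simp only [hg]
      ring
    rw [← this]
    exact h3
  -- bound on the coefficient
  obtain ⟨K, hK⟩ : ∃ K, ∀ t ∈ Set.Icc (0:ℝ) 1, ‖⟪Γ (ψ t), deriv ψ t⟫‖ ≤ K := by
    have hc : ContinuousOn (fun t => ⟪Γ (ψ t), deriv ψ t⟫) (Set.Icc (0:ℝ) 1) := by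
      apply Continuous.continuousOn
      exact (hΓ.comp hψ.continuous).inner (hψ.continuous_deriv le_rfl)
    exact (isCompact_Icc).exists_bound_of_continuousOn hc
  have hbound : ∀ t ∈ Set.Ico (0:ℝ) 1, ‖g' t‖ ≤ K * ‖g t‖ + 0 := by
    intro t ht
    have ht' : t ∈ Set.Icc (0:ℝ) 1 := Set.Ico_subset_Icc_self ht
    have : ‖g' t‖ = ‖⟪Γ (ψ t), deriv ψ t⟫‖ * ‖g t‖ := by
      rw [hg']; rw [norm_neg, norm_mul]
    rw [this, add_zero]
    exact mul_le_mul_of_nonneg_right (hK t ht') (norm_nonneg _)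
  have hcont : ContinuousOn g (Set.Icc (0:ℝ) 1) := by
    intro t ht
    exact ((hderiv t ht).differentiableAt.continuousAt).continuousWithinAt
  have hzero := norm_le_gronwallBound_of_norm_deriv_right_le (δ := 0) hcont
    (fun t ht => ((hderiv t (Set.Ico_subset_Icc_self ht)).hasDerivWithinAt))
    (by simp [hg, h0]) hbound
  intro t ht
  have := hzero t ht
  rw [gronwallBound_ε0_δ0] at this
  have : ‖g t‖ ≤ 0 := this
  have : g t = 0 := by simpa using le_antisymm this (norm_nonneg _)
  exact sub_eq_zero.mp this
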